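/- Let H₀ be a skew-symmetric operator and let (𝒢₁, 𝒢₂, F) be a boundary system for H₀ with the standard symmetric and standard unitary forms. Then an operator H ⊆ H₀* is skew-self-adjoint if and only if there exists a unitary operator L : 𝒢₁ → 𝒢₂ such that D(H) = {x ∈ D(H₀*) : L F₁x = F₂x} (and Hx = H₀*x for x ∈ D(H)). -/

import Mathlib

open scoped InnerProductSpace

/-- **Theorem A.** Let `(𝒢₁, 𝒢₂, F)` be a boundary system for the
skew-symmetric operator `H₀` with the standard symmetric and unitary forms. An operator
`H ⊆ H₀*` is skew-self-adjoint iff there is a unitary `L : 𝒢₁ → 𝒢₂` with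
`D(H) = {x ∈ D(H₀*) : L F₁x = F₂x}` (and `Hx = H₀*x` on `D(H)`). -/
theorem stmt_13 {ℋ 𝒢₁ 𝒢₂ : Type*}
    [NormedAddCommGroup ℋ] [InnerProductSpace ℂ ℋ] [CompleteSpace ℋ]
    [NormedAddCommGroup 𝒢₁] [InnerProductSpace ℂ 𝒢₁] [CompleteSpace 𝒢₁]
    [NormedAddCommGroup 𝒢₂] [InnerProductSpace ℂ 𝒢₂] [CompleteSpace 𝒢₂]
    (H₀ : ℋ →ₗ.[ℂ] ℋ)
    (hdense : Dense (H₀.domain : Set ℋ)) (hclosed : H₀.IsClosed)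
    (hskew : H₀ ≤ -H₀.adjoint)
    -- `(𝒢₁, 𝒢₂, F)` is a boundary system for `H₀`:
    (F : H₀.adjoint.domain → 𝒢₁ × 𝒢₂)
    (hFsurj : Function.Surjective F)
    (hFsys : ∀ x y : H₀.adjoint.domain,
      ⟪(x : ℋ), H₀.adjoint y⟫_ℂ + ⟪H₀.adjoint x, (y : ℋ)⟫_ℂ
        = ⟪(F x).1, (F y).1⟫_ℂ - ⟪(F x).2, (F y).2⟫_ℂ)
    -- a restriction `H ⊆ H₀*`:
    (H : ℋ →ₗ.[ℂ] ℋ) (hres : H ≤ H₀.adjoint) :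
    (Dense (H.domain : Set ℋ) ∧ H = -H.adjoint) ↔
      ∃ L : 𝒢₁ ≃ₗᵢ[ℂ] 𝒢₂,
        (H.domain : Set ℋ) = {x : ℋ | ∃ hx : x ∈ H₀.adjoint.domain,
            L ((F (⟨x, hx⟩ : H₀.adjoint.domain)).1) = (F (⟨x, hx⟩ : H₀.adjoint.domain)).2} ∧
          ∀ x : H.domain, ∃ hx : (x : ℋ) ∈ H₀.adjoint.domain,
            H x = H₀.adjoint (⟨(x : ℋ), hx⟩ : H₀.adjoint.domain) := by
  classical
  -- common facts
  have hTle : H₀.domain ≤ H₀.adjoint.domain := hskew.1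
  have hskew' : ∀ x : H₀.domain, H₀.adjoint ⟨(x : ℋ), hTle x.2⟩ = -(H₀ x) := by
    intro x
    have h := hskew.2 (x := x) (y := ⟨(x : ℋ), hTle x.2⟩) rfl
    rw [LinearPMap.neg_apply] at h
    rw [h, neg_neg]
  have hfa : ∀ (y : H₀.adjoint.domain) (x : H₀.domain),
      ⟪H₀.adjoint y, (x : ℋ)⟫_ℂ = ⟪(y : ℋ), H₀ x⟫_ℂ :=
    LinearPMap.adjoint_isFormalAdjoint hdense
  have hbeta0 : ∀ (x : H₀.domain) (y : H₀.adjoint.domain),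
      ⟪(F ⟨(x:ℋ), hTle x.2⟩).1, (F y).1⟫_ℂ = ⟪(F ⟨(x:ℋ), hTle x.2⟩).2, (F y).2⟫_ℂ := by
    intro x y
    have h := hFsys ⟨(x:ℋ), hTle x.2⟩ y
    rw [hskew' x] at h
    have h2 : ⟪((⟨(x:ℋ), hTle x.2⟩ : H₀.adjoint.domain) : ℋ), H₀.adjoint y⟫_ℂ
        = ⟪H₀ x, (y : ℋ)⟫_ℂ := by
      calc ⟪((⟨(x:ℋ), hTle x.2⟩ : H₀.adjoint.domain) : ℋ), H₀.adjoint y⟫_ℂ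
          = starRingEnd ℂ ⟪H₀.adjoint y, ((⟨(x:ℋ), hTle x.2⟩ : H₀.adjoint.domain) : ℋ)⟫_ℂ :=
            (inner_conj_symm _ _).symm
        _ = starRingEnd ℂ ⟪(y:ℋ), H₀ x⟫_ℂ := by rw [hfa y x]
        _ = ⟪H₀ x, (y:ℋ)⟫_ℂ := inner_conj_symm _ _
    rw [h2, inner_neg_left] at h
    linear_combination -h
  have hF0 : ∀ x : H₀.domain, F ⟨(x:ℋ), hTle x.2⟩ = 0 := by
    intro x
    obtain ⟨y₁, hy₁⟩ := hFsurj ((F ⟨(x:ℋ), hTle x.2⟩).1, 0)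
    obtain ⟨y₂, hy₂⟩ := hFsurj (0, (F ⟨(x:ℋ), hTle x.2⟩).2)
    have h1 := hbeta0 x y₁
    have h2 := hbeta0 x y₂
    rw [hy₁] at h1
    rw [hy₂] at h2
    simp only [inner_zero_right] at h1 h2
    exact Prod.ext (inner_self_eq_zero.mp h1) (inner_self_eq_zero.mp h2.symm)
  constructor
  · rintro ⟨hHdense, heq⟩
    have hDeq : H.domain = H.adjoint.domain := (congrArg LinearPMap.domain heq).trans rfl
    have hle : H ≤ -H.adjoint := by
      have hrefl : -H.adjoint ≤ -H.adjoint :=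
        ⟨le_rfl, fun a b hab => by rw [show a = b from Subtype.ext hab]⟩
      nth_rewrite 1 [heq]
      exact hrefl
    have hHval' : ∀ (x : H.domain) (hx : (x:ℋ) ∈ H.adjoint.domain),
        H x = -(H.adjoint ⟨(x:ℋ), hx⟩) := by
      intro x hx
      have h := hle.2 (x := x) (y := ⟨(x:ℋ), hx⟩) rfl
      rwa [LinearPMap.neg_apply] at h
    have hfaH : ∀ (p : H.adjoint.domain) (z : H.domain),
        ⟪H.adjoint p, (z:ℋ)⟫_ℂ = ⟪(p:ℋ), H z⟫_ℂ :=
      LinearPMap.adjoint_isFormalAdjoint hHdense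
    have hskewH : ∀ x z : H.domain, ⟪(x:ℋ), H z⟫_ℂ + ⟪H x, (z:ℋ)⟫_ℂ = 0 := by
      intro x z
      have hx : (x:ℋ) ∈ H.adjoint.domain := hDeq ▸ x.2
      have h1 := hHval' x hx
      have h2 := hfaH ⟨(x:ℋ), hx⟩ z
      rw [h1, inner_neg_left]
      linear_combination -h2
    have hHval : ∀ z : H.domain, H z = H₀.adjoint ⟨(z:ℋ), hres.1 z.2⟩ := fun z => hres.2 rfl
    have hβ : ∀ x z : H.domain,
        ⟪(F ⟨(x:ℋ), hres.1 x.2⟩).1, (F ⟨(z:ℋ), hres.1 z.2⟩).1⟫_ℂ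
          = ⟪(F ⟨(x:ℋ), hres.1 x.2⟩).2, (F ⟨(z:ℋ), hres.1 z.2⟩).2⟫_ℂ := by
      intro x z
      have h := hFsys ⟨(x:ℋ), hres.1 x.2⟩ ⟨(z:ℋ), hres.1 z.2⟩
      rw [← hHval x, ← hHval z] at h
      have h0 := hskewH x z
      linear_combination h0 - h
    have hM : ∀ p : H₀.adjoint.domain,
        (∀ z : H.domain, ⟪(F p).1, (F ⟨(z:ℋ), hres.1 z.2⟩).1⟫_ℂ
          = ⟪(F p).2, (F ⟨(z:ℋ), hres.1 z.2⟩).2⟫_ℂ) → (p:ℋ) ∈ H.domain := by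
      intro p hp
      have hmem : (p:ℋ) ∈ H.adjoint.domain := by
        apply LinearPMap.mem_adjoint_domain_of_exists
        refine ⟨-(H₀.adjoint p), fun z => ?_⟩
        have h := hFsys p ⟨(z:ℋ), hres.1 z.2⟩
        rw [← hHval z] at h
        rw [inner_neg_left]
        linear_combination -h - hp z
      exact hDeq.symm ▸ hmem
    set W : Submodule ℂ (𝒢₁ × 𝒢₂) :=
      { carrier := {gh | ∀ z : H.domain,
          ⟪gh.1, (F ⟨(z:ℋ), hres.1 z.2⟩).1⟫_ℂ = ⟪gh.2, (F ⟨(z:ℋ), hres.1 z.2⟩).2⟫_ℂ}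
        add_mem' := fun {a b} ha hb z => by
          simp only [Prod.fst_add, Prod.snd_add, inner_add_left, ha z, hb z]
        zero_mem' := fun z => by simp
        smul_mem' := fun c a ha z => by
          simp only [Prod.smul_fst, Prod.smul_snd, inner_smul_left, ha z] } with hWdef
    have hWmem : ∀ gh : 𝒢₁ × 𝒢₂, gh ∈ W ↔ ∀ z : H.domain,
        ⟪gh.1, (F ⟨(z:ℋ), hres.1 z.2⟩).1⟫_ℂ = ⟪gh.2, (F ⟨(z:ℋ), hres.1 z.2⟩).2⟫_ℂ :=
      fun gh => Iff.rfl
    have hPW : ∀ z : H.domain, F ⟨(z:ℋ), hres.1 z.2⟩ ∈ W :=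
      fun z => (hWmem _).mpr (fun z' => hβ z z')
    have hWP : ∀ gh : 𝒢₁ × 𝒢₂, gh ∈ W → ∃ z : H.domain, F ⟨(z:ℋ), hres.1 z.2⟩ = gh := by
      intro gh hgh
      obtain ⟨p, hp⟩ := hFsurj gh
      have hpH : (p:ℋ) ∈ H.domain := hM p (by intro z; rw [hp]; exact (hWmem gh).mp hgh z)
      refine ⟨⟨(p:ℋ), hpH⟩, ?_⟩
      have hpe : (⟨((⟨(p:ℋ), hpH⟩ : H.domain) : ℋ), hres.1 hpH⟩ : H₀.adjoint.domain) = p :=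
        Subtype.ext rfl
      rw [hpe, hp]
    have hWinner : ∀ gh : 𝒢₁ × 𝒢₂, gh ∈ W → ∀ gh' : 𝒢₁ × 𝒢₂, gh' ∈ W →
        ⟪gh.1, gh'.1⟫_ℂ = ⟪gh.2, gh'.2⟫_ℂ := by
      intro gh hgh gh' hgh'
      obtain ⟨z, hz⟩ := hWP gh' hgh'
      rw [← hz]
      exact (hWmem gh).mp hgh z
    have hWuniq : ∀ (g : 𝒢₁) (h h' : 𝒢₂), (g, h) ∈ W → (g, h') ∈ W → h = h' := by
      intro g h h' h1 h2
      have hd : ((0:𝒢₁), h - h') ∈ W := by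
        have := W.sub_mem h1 h2
        simpa using this
      have h3 := hWinner _ hd _ hd
      simp only [inner_zero_left] at h3
      have h4 := inner_self_eq_zero.mp h3.symm
      exact sub_eq_zero.mp h4
    set V₁ : Submodule ℂ 𝒢₁ := W.map (LinearMap.fst ℂ 𝒢₁ 𝒢₂) with hV₁def
    have hV₁dense : Dense (V₁ : Set 𝒢₁) := by
      rw [Submodule.dense_iff_topologicalClosure_eq_top,
        Submodule.topologicalClosure_eq_top_iff, Submodule.eq_bot_iff]
      intro u hu
      rw [Submodule.mem_orthogonal] at hu
      have hu0 : ((u, (0:𝒢₂)) : 𝒢₁ × 𝒢₂) ∈ W := by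
        rw [hWmem]
        intro z
        have h1 : (F ⟨(z:ℋ), hres.1 z.2⟩).1 ∈ V₁ := ⟨F ⟨(z:ℋ), hres.1 z.2⟩, hPW z, rfl⟩
        have h2 := hu _ h1
        have h3 : ⟪u, (F ⟨(z:ℋ), hres.1 z.2⟩).1⟫_ℂ = 0 := by
          rw [← inner_conj_symm, h2, map_zero]
        simpa using h3
      have h5 : u ∈ V₁ := ⟨(u, 0), hu0, rfl⟩
      exact inner_self_eq_zero.mp (hu u h5)
    have hV₂dense : Dense ((W.map (LinearMap.snd ℂ 𝒢₁ 𝒢₂)) : Set 𝒢₂) := by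
      rw [Submodule.dense_iff_topologicalClosure_eq_top,
        Submodule.topologicalClosure_eq_top_iff, Submodule.eq_bot_iff]
      intro u hu
      rw [Submodule.mem_orthogonal] at hu
      have hu0 : (((0:𝒢₁), u) : 𝒢₁ × 𝒢₂) ∈ W := by
        rw [hWmem]
        intro z
        have h1 : (F ⟨(z:ℋ), hres.1 z.2⟩).2 ∈ W.map (LinearMap.snd ℂ 𝒢₁ 𝒢₂) :=
          ⟨F ⟨(z:ℋ), hres.1 z.2⟩, hPW z, rfl⟩
        have h2 := hu _ h1
        have h3 : ⟪u, (F ⟨(z:ℋ), hres.1 z.2⟩).2⟫_ℂ = 0 := by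
          rw [← inner_conj_symm, h2, map_zero]
        simpa using h3.symm
      have h5 : u ∈ W.map (LinearMap.snd ℂ 𝒢₁ 𝒢₂) := ⟨(0, u), hu0, rfl⟩
      exact inner_self_eq_zero.mp (hu u h5)
    have hchoice : ∀ g : V₁, ∃ h : 𝒢₂, (((g:𝒢₁), h) : 𝒢₁ × 𝒢₂) ∈ W := by
      intro g
      obtain ⟨w, hw, hw1⟩ := g.2
      refine ⟨w.2, ?_⟩
      have he : (((g:𝒢₁), w.2) : 𝒢₁ × 𝒢₂) = w := by
        rw [← hw1]; exact Prod.mk.eta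
      rw [he]; exact hw
    choose L₀f hL₀ using hchoice
    set L₀ : V₁ →ₗ[ℂ] 𝒢₂ :=
      { toFun := L₀f
        map_add' := by
          intro a b
          refine hWuniq _ _ _ (hL₀ (a+b)) ?_
          have h := W.add_mem (hL₀ a) (hL₀ b)
          simpa using h
        map_smul' := by
          intro c a
          simp only [RingHom.id_apply]
          refine hWuniq _ _ _ (hL₀ (c • a)) ?_
          have h := W.smul_mem c (hL₀ a)
          simpa using h } with hL₀def
    have hL₀app : ∀ a : V₁, L₀ a = L₀f a := fun a => rfl
    have hL₀inner : ∀ a b : V₁, ⟪L₀ a, L₀ b⟫_ℂ = ⟪(a:𝒢₁), (b:𝒢₁)⟫_ℂ :=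
      fun a b => (hWinner _ (hL₀ a) _ (hL₀ b)).symm
    have hL₀i : Continuous L₀ := (L₀.isometryOfInner (fun a b => hL₀inner a b)).continuous
    set L₀c : V₁ →L[ℂ] 𝒢₂ := ⟨L₀, hL₀i⟩ with hL₀cdef
    set Lc : 𝒢₁ →L[ℂ] 𝒢₂ :=
      L₀c.extend (Submodule.subtypeL V₁) with hLcdef
    have hLc : ∀ a : V₁, Lc (a:𝒢₁) = L₀ a := fun a =>
      ContinuousLinearMap.extend_eq L₀c (e := Submodule.subtypeL V₁) hV₁dense.denseRange_val
        isUniformEmbedding_subtype_val.isUniformInducing a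
    have hLcinner : ∀ x y : 𝒢₁, ⟪Lc x, Lc y⟫_ℂ = ⟪x, y⟫_ℂ := by
      have hcl : IsClosed {p : 𝒢₁ × 𝒢₁ | ⟪Lc p.1, Lc p.2⟫_ℂ = ⟪p.1, p.2⟫_ℂ} :=
        isClosed_eq
          (Continuous.inner (Lc.continuous.comp continuous_fst)
            (Lc.continuous.comp continuous_snd))
          (Continuous.inner continuous_fst continuous_snd)
      have hsub : (V₁ : Set 𝒢₁) ×ˢ (V₁ : Set 𝒢₁) ⊆
          {p : 𝒢₁ × 𝒢₁ | ⟪Lc p.1, Lc p.2⟫_ℂ = ⟪p.1, p.2⟫_ℂ} := by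
        rintro ⟨a, b⟩ ⟨ha, hb⟩
        have e1 : Lc a = L₀ ⟨a, ha⟩ := hLc ⟨a, ha⟩
        have e2 : Lc b = L₀ ⟨b, hb⟩ := hLc ⟨b, hb⟩
        show ⟪Lc a, Lc b⟫_ℂ = ⟪a, b⟫_ℂ
        rw [e1, e2]
        exact hL₀inner ⟨a, ha⟩ ⟨b, hb⟩
      intro x y
      have hxy : ((x, y) : 𝒢₁ × 𝒢₁) ∈ closure ((V₁ : Set 𝒢₁) ×ˢ (V₁ : Set 𝒢₁)) :=
        (hV₁dense.prod hV₁dense) (x, y)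
      exact closure_minimal hsub hcl hxy
    set Li : 𝒢₁ →ₗᵢ[ℂ] 𝒢₂ :=
      ((Lc : 𝒢₁ →ₗ[ℂ] 𝒢₂)).isometryOfInner (fun x y => hLcinner x y) with hLidef
    have hLiapp : ∀ x : 𝒢₁, Li x = Lc x := fun x => rfl
    have hrange : IsClosed (Set.range Li) := Li.isometry.isClosedEmbedding.isClosed_range
    have hLW : ∀ gh : 𝒢₁ × 𝒢₂, gh ∈ W → Li gh.1 = gh.2 := by
      intro gh hgh
      have hg1 : gh.1 ∈ V₁ := ⟨gh, hgh, rfl⟩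
      have e1 : Li gh.1 = L₀ ⟨gh.1, hg1⟩ := hLc ⟨gh.1, hg1⟩
      rw [e1]
      refine hWuniq gh.1 _ _ (hL₀ ⟨gh.1, hg1⟩) ?_
      exact hgh
    have hsurj : Function.Surjective Li := by
      intro w
      have hw : w ∈ closure ((W.map (LinearMap.snd ℂ 𝒢₁ 𝒢₂)) : Set 𝒢₂) := hV₂dense w
      have hsub : ((W.map (LinearMap.snd ℂ 𝒢₁ 𝒢₂)) : Set 𝒢₂) ⊆ Set.range Li := by
        rintro h ⟨gh, hgh, rfl⟩
        exact ⟨gh.1, hLW gh hgh⟩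
      exact closure_minimal hsub hrange hw
    refine ⟨LinearIsometryEquiv.ofSurjective Li hsurj, ?_, fun x => ⟨hres.1 x.2, hres.2 rfl⟩⟩
    have hLdef : ∀ g : 𝒢₁, (LinearIsometryEquiv.ofSurjective Li hsurj) g = Li g := fun g => by
      rw [LinearIsometryEquiv.coe_ofSurjective]
    apply Set.ext
    intro x
    constructor
    · intro hx
      have hx' : x ∈ H.domain := hx
      refine ⟨hres.1 hx', ?_⟩
      have hp : F ⟨x, hres.1 hx'⟩ ∈ W := hPW ⟨x, hx'⟩
      rw [hLdef]
      exact hLW _ hp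
    · rintro ⟨hx, hLx⟩
      have hres1 : ∀ z : H.domain,
          (LinearIsometryEquiv.ofSurjective Li hsurj) ((F ⟨(z:ℋ), hres.1 z.2⟩).1)
            = (F ⟨(z:ℋ), hres.1 z.2⟩).2 := by
        intro z
        rw [hLdef]
        exact hLW _ (hPW z)
      have hmem : ((⟨x, hx⟩ : H₀.adjoint.domain) : ℋ) ∈ H.domain := by
        apply hM ⟨x, hx⟩
        intro z
        calc ⟪(F ⟨x, hx⟩).1, (F ⟨(z:ℋ), hres.1 z.2⟩).1⟫_ℂ
            = ⟪(LinearIsometryEquiv.ofSurjective Li hsurj) ((F ⟨x, hx⟩).1),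
                (LinearIsometryEquiv.ofSurjective Li hsurj) ((F ⟨(z:ℋ), hres.1 z.2⟩).1)⟫_ℂ :=
              (LinearIsometryEquiv.inner_map_map _ _ _).symm
          _ = ⟪(F ⟨x, hx⟩).2, (F ⟨(z:ℋ), hres.1 z.2⟩).2⟫_ℂ := by rw [hLx, hres1 z]
      exact hmem
  · rintro ⟨L, hdom, hval⟩
    have hmemH : ∀ z : ℋ, z ∈ H.domain ↔ ∃ hz : z ∈ H₀.adjoint.domain,
        L ((F ⟨z, hz⟩).1) = (F ⟨z, hz⟩).2 := by
      intro z
      have := Set.ext_iff.mp hdom z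
      simpa using this
    have hH₀H : ∀ x : H₀.domain, (x : ℋ) ∈ H.domain := by
      intro x
      rw [hmemH]
      exact ⟨hTle x.2, by rw [hF0 x]; simp⟩
    have hHdense : Dense (H.domain : Set ℋ) :=
      Dense.mono (fun z hz => hH₀H ⟨z, hz⟩) hdense
    refine ⟨hHdense, ?_⟩
    have hHval : ∀ x : H.domain, H x = H₀.adjoint ⟨(x:ℋ), hres.1 x.2⟩ := fun x => hres.2 rfl
    have hLH : ∀ x : H.domain, L ((F ⟨(x:ℋ), hres.1 x.2⟩).1) = (F ⟨(x:ℋ), hres.1 x.2⟩).2 := by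
      intro x
      obtain ⟨hz, h⟩ := (hmemH x).mp x.2
      exact h
    have hskewH : ∀ x z : H.domain, ⟪(x:ℋ), H z⟫_ℂ + ⟪H x, (z:ℋ)⟫_ℂ = 0 := by
      intro x z
      have h := hFsys ⟨(x:ℋ), hres.1 x.2⟩ ⟨(z:ℋ), hres.1 z.2⟩
      rw [← hLH x, ← hLH z, LinearIsometryEquiv.inner_map_map, sub_self] at h
      rw [hHval x, hHval z]
      exact h
    have hadj_mem : ∀ x : H.domain, (x:ℋ) ∈ H.adjoint.domain := by
      intro x
      apply LinearPMap.mem_adjoint_domain_of_exists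
      refine ⟨-(H x), fun z => ?_⟩
      rw [inner_neg_left]
      linear_combination -(hskewH x z)
    have hadj_val : ∀ (x : H.domain) (hx : (x:ℋ) ∈ H.adjoint.domain),
        H.adjoint ⟨(x:ℋ), hx⟩ = -(H x) := by
      intro x hx
      apply LinearPMap.adjoint_apply_eq hHdense
      intro z
      rw [inner_neg_left]
      linear_combination -(hskewH x z)
    have hadj_dom : ∀ y : H.adjoint.domain, (y:ℋ) ∈ H.domain := by
      intro y
      have hw : ∀ z : H.domain, ⟪H.adjoint y, (z:ℋ)⟫_ℂ = ⟪(y:ℋ), H z⟫_ℂ :=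
        fun z => LinearPMap.adjoint_isFormalAdjoint hHdense y z
      have hxw : ∀ x : H₀.domain, ⟪-(H.adjoint y), (x:ℋ)⟫_ℂ = ⟪(y:ℋ), H₀ x⟫_ℂ := by
        intro x
        have h1 : H (⟨(x:ℋ), hH₀H x⟩ : H.domain) = -(H₀ x) := by
          rw [hHval ⟨(x:ℋ), hH₀H x⟩]
          exact hskew' x
        have h2 := hw ⟨(x:ℋ), hH₀H x⟩
        rw [h1, inner_neg_right] at h2
        rw [inner_neg_left]
        linear_combination -h2
      have hyT : (y:ℋ) ∈ H₀.adjoint.domain :=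
        LinearPMap.mem_adjoint_domain_of_exists _ ⟨-(H.adjoint y), hxw⟩
      have hTy : H₀.adjoint ⟨(y:ℋ), hyT⟩ = -(H.adjoint y) :=
        LinearPMap.adjoint_apply_eq hdense _ hxw
      have hb : ∀ z : H.domain, ⟪(F ⟨(y:ℋ), hyT⟩).1, (F ⟨(z:ℋ), hres.1 z.2⟩).1⟫_ℂ
          = ⟪(F ⟨(y:ℋ), hyT⟩).2, (F ⟨(z:ℋ), hres.1 z.2⟩).2⟫_ℂ := by
        intro z
        have h := hFsys ⟨(y:ℋ), hyT⟩ ⟨(z:ℋ), hres.1 z.2⟩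
        rw [hTy, ← hHval z, inner_neg_left] at h
        have h2 := hw z
        linear_combination -h - h2
      have hkey : L ((F ⟨(y:ℋ), hyT⟩).1) = (F ⟨(y:ℋ), hyT⟩).2 := by
        have hL : (F ⟨(y:ℋ), hyT⟩).1 = L.symm ((F ⟨(y:ℋ), hyT⟩).2) := by
          apply ext_inner_right ℂ
          intro g
          obtain ⟨p, hp⟩ := hFsurj (g, L g)
          have hpH : (p:ℋ) ∈ H.domain := by
            rw [hmemH]
            refine ⟨p.2, ?_⟩
            have hpe : (⟨(p:ℋ), p.2⟩ : H₀.adjoint.domain) = p := Subtype.ext rfl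
            rw [hpe, hp]
          have hb2 := hb ⟨(p:ℋ), hpH⟩
          have hpe : (⟨((⟨(p:ℋ), hpH⟩ : H.domain) : ℋ), hres.1 hpH⟩ : H₀.adjoint.domain) = p :=
            Subtype.ext rfl
          rw [hpe, hp] at hb2
          rw [← LinearIsometryEquiv.inner_map_map L (L.symm ((F ⟨(y:ℋ), hyT⟩).2)) g,
            L.apply_symm_apply]
          exact hb2
        rw [hL, L.apply_symm_apply]
      rw [hmemH]
      exact ⟨hyT, hkey⟩
    have hdomeq : H.domain = H.adjoint.domain :=
      le_antisymm (fun z hz => hadj_mem ⟨z, hz⟩) (fun z hz => hadj_dom ⟨z, hz⟩)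
    refine LinearPMap.ext hdomeq ?_
    intro a b hab
    rw [LinearPMap.neg_apply]
    have hxa : (a:ℋ) ∈ H.adjoint.domain := hab
    have hv := hadj_val ⟨a, b⟩ hxa
    have hbe : (⟨(a:ℋ), hxa⟩ : H.adjoint.domain) = ⟨a, hab⟩ := rfl
    rw [hbe] at hv
    rw [hv, neg_neg]
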